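/- Let T>0, n≥1 an integer, τ=T/n, t_k=kτ. Let s:[0,T]→ℝ be absolutely continuous with square-integrable derivative s', and let σ₁,…,σₙ∈ℝ. Define Δ = ⋃_{k=1}^{n} {(x,t)∈ℝ² : t_{k-1}<t<t_k, min(s(t),σ_k)<x<max(s(t),σ_k)}. Then the two-dimensional Lebesgue measure of Δ satisfies |Δ| ≤ √T·(∫₀ᵀ s'(t)² dt)^{1/2}·τ + T·max_{1≤k≤n}|s(t_k)−σ_k|. -/

import Mathlib

open MeasureTheory Filter Topology

lemma cs_aux {a b : ℝ} (hab : a ≤ b) {f : ℝ → ℝ}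
    (hf : IntervalIntegrable f volume a b)
    (hf2 : IntervalIntegrable (fun t => (f t)^2) volume a b) :
    ∫ t in a..b, |f t| ≤ Real.sqrt (b - a) * Real.sqrt (∫ t in a..b, (f t)^2) := by
  have hfi : IntegrableOn f (Set.Ioc a b) := by
    rwa [intervalIntegrable_iff_integrableOn_Ioc_of_le hab] at hf
  have hf2i : IntegrableOn (fun t => (f t)^2) (Set.Ioc a b) := by
    rwa [intervalIntegrable_iff_integrableOn_Ioc_of_le hab] at hf2
  set μ := volume.restrict (Set.Ioc a b) with hμ
  have hmem : MemLp (fun t => |f t|) (ENNReal.ofReal 2) μ := by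
    rw [show ENNReal.ofReal 2 = 2 by norm_num]
    rw [memLp_two_iff_integrable_sq (hfi.abs.aestronglyMeasurable)]
    simpa [sq_abs, IntegrableOn] using hf2i
  have hone : MemLp (fun _ : ℝ => (1:ℝ)) (ENNReal.ofReal 2) μ := memLp_const 1
  have hpq : Real.HolderConjugate 2 2 := Real.HolderConjugate.two_two
  have H := MeasureTheory.integral_mul_le_Lp_mul_Lq_of_nonneg hpq
      (Filter.Eventually.of_forall fun x => abs_nonneg (f x))
      (Filter.Eventually.of_forall fun _ => zero_le_one) hmem hone
  simp only [mul_one] at H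
  have h1 : ∫ x, |f x| ^ (2:ℝ) ∂μ = ∫ x, (f x)^2 ∂μ := by
    apply integral_congr_ae
    filter_upwards with x
    rw [show ((2:ℝ)) = ((2:ℕ):ℝ) by norm_num, Real.rpow_natCast, sq_abs]
  have h2 : ∫ x, (1:ℝ) ^ (2:ℝ) ∂μ = b - a := by
    simp [Real.one_rpow, hμ, Real.volume_Ioc, ENNReal.toReal_ofReal (sub_nonneg.2 hab), hab]
  rw [h1, h2] at H
  rw [intervalIntegral.integral_of_le hab, intervalIntegral.integral_of_le hab]
  calc ∫ t in Set.Ioc a b, |f t| ≤ _ := H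
  _ = Real.sqrt (b - a) * Real.sqrt (∫ t in Set.Ioc a b, (f t)^2) := by
      rw [← Real.sqrt_eq_rpow, ← Real.sqrt_eq_rpow, mul_comm]

/-- the measure estimate for the region `Δ` between the curve `x = s(t)` and
the piecewise constant levels `x = σ_k` over the uniform time partition. -/
theorem stmt_17 (T : ℝ) (hT : 0 < T) (n : ℕ) (hn : 1 ≤ n) (τ : ℝ) (hτ : τ = T / n)
    (s s' : ℝ → ℝ)
    (hs'int : IntervalIntegrable s' volume 0 T)
    (hs'sq : IntervalIntegrable (fun t => (s' t)^2) volume 0 T)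
    (hftc : ∀ a b : ℝ, 0 ≤ a → a ≤ b → b ≤ T → s b - s a = ∫ t in a..b, s' t)
    (σ : ℕ → ℝ) :
    volume (⋃ k ∈ Finset.Icc 1 n,
        {p : ℝ × ℝ | ((k:ℝ)-1)*τ < p.2 ∧ p.2 < (k:ℝ)*τ ∧
          min (s p.2) (σ k) < p.1 ∧ p.1 < max (s p.2) (σ k)})
      ≤ ENNReal.ofReal
          (Real.sqrt T * Real.sqrt (∫ t in (0:ℝ)..T, (s' t)^2) * τ
            + T * (Finset.Icc 1 n).sup' (Finset.nonempty_Icc.mpr hn)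
                (fun k => |s ((k:ℝ)*τ) - σ k|)) := by
  have hnR : (0:ℝ) < n := by exact_mod_cast Nat.lt_of_lt_of_le Nat.zero_lt_one hn
  have hτ0 : 0 < τ := by rw [hτ]; positivity
  have hnτ : (n:ℝ) * τ = T := by rw [hτ]; field_simp
  set M := (Finset.Icc 1 n).sup' (Finset.nonempty_Icc.mpr hn)
      (fun k => |s ((k:ℝ)*τ) - σ k|) with hMdef
  have hM : ∀ k ∈ Finset.Icc 1 n, |s ((k:ℝ)*τ) - σ k| ≤ M := by
    intro k hk
    rw [hMdef]
    exact Finset.le_sup' (fun k : ℕ => |s ((k:ℝ)*τ) - σ k|) hk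
  have hM0 : 0 ≤ M := le_trans (abs_nonneg _) (hM 1 (by simp [hn]))
  -- a continuous representative of s on [0, T]
  have hs'Icc : IntegrableOn s' (Set.uIcc 0 T) := by
    rw [Set.uIcc_of_le hT.le, integrableOn_Icc_iff_integrableOn_Ioc]
    rwa [intervalIntegrable_iff_integrableOn_Ioc_of_le hT.le] at hs'int
  have hFcont : ContinuousOn (fun x => ∫ u in (0:ℝ)..x, s' u) (Set.uIcc 0 T) :=
    intervalIntegral.continuousOn_primitive_interval hs'Icc
  set c : ℝ → ℝ := fun t => max 0 (min t T) with hc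
  have hccont : Continuous c := continuous_const.max (continuous_id.min continuous_const)
  have hcmem : ∀ t, c t ∈ Set.uIcc 0 T := by
    intro t
    rw [Set.uIcc_of_le hT.le]
    exact ⟨le_max_left _ _, max_le hT.le (min_le_right _ _)⟩
  set sc : ℝ → ℝ := fun t => s 0 + ∫ u in (0:ℝ)..(c t), s' u with hscdef
  have hsccont : Continuous sc :=
    continuous_const.add (hFcont.comp_continuous hccont hcmem)
  have hsceq : ∀ t, 0 ≤ t → t ≤ T → sc t = s t := by
    intro t ht0 htT
    have hct : c t = t := by
      simp only [hc]
      rw [min_eq_left htT, max_eq_right ht0]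
    simp only [hscdef, hct]
    rw [← hftc 0 t le_rfl ht0 htT]
    ring
  -- per piece estimate
  have key : ∀ k ∈ Finset.Icc 1 n,
      volume {p : ℝ × ℝ | ((k:ℝ)-1)*τ < p.2 ∧ p.2 < (k:ℝ)*τ ∧
          min (s p.2) (σ k) < p.1 ∧ p.1 < max (s p.2) (σ k)}
        ≤ ENNReal.ofReal (τ * (Real.sqrt τ *
            Real.sqrt (∫ t in (((k:ℝ)-1)*τ)..((k:ℝ)*τ), (s' t)^2) + M)) := by
    intro k hk
    obtain ⟨hk1, hkn⟩ := Finset.mem_Icc.mp hk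
    set a := ((k:ℝ)-1)*τ with hadef
    set b := (k:ℝ)*τ with hbdef
    have hk1R : (1:ℝ) ≤ (k:ℝ) := by exact_mod_cast hk1
    have ha0 : 0 ≤ a := mul_nonneg (by linarith) hτ0.le
    have hba : b = a + τ := by rw [hadef, hbdef]; ring
    have hab : a ≤ b := by rw [hba]; linarith
    have hbT : b ≤ T := by
      rw [← hnτ, hbdef]
      exact mul_le_mul_of_nonneg_right (by exact_mod_cast hkn) hτ0.le
    have hsub : Set.uIcc a b ⊆ Set.uIcc 0 T := by
      rw [Set.uIcc_of_le hab, Set.uIcc_of_le hT.le]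
      exact Set.Icc_subset_Icc ha0 hbT
    have hs'ab : IntervalIntegrable s' volume a b := hs'int.mono_set hsub
    have hs'sqab : IntervalIntegrable (fun t => (s' t)^2) volume a b :=
      hs'sq.mono_set hsub
    have habs : IntervalIntegrable (fun u => |s' u|) volume a b := hs'ab.abs
    -- rewrite the set via swap and regionBetween
    have hseq : {p : ℝ × ℝ | a < p.2 ∧ p.2 < b ∧
          min (s p.2) (σ k) < p.1 ∧ p.1 < max (s p.2) (σ k)}
        = Prod.swap ⁻¹' (regionBetween (fun t => min (sc t) (σ k))
            (fun t => max (sc t) (σ k)) (Set.Ioo a b)) := by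
      ext p
      simp only [regionBetween, Set.mem_setOf_eq, Set.mem_preimage, Prod.fst_swap,
        Prod.snd_swap, Set.mem_Ioo]
      constructor
      · rintro ⟨h1, h2, h3, h4⟩
        have hst : sc p.2 = s p.2 := hsceq _ (le_trans ha0 h1.le) (h2.le.trans hbT)
        exact ⟨⟨h1, h2⟩, by rw [hst]; exact h3, by rw [hst]; exact h4⟩
      · rintro ⟨⟨h1, h2⟩, h3, h4⟩
        have hst : sc p.2 = s p.2 := hsceq _ (le_trans ha0 h1.le) (h2.le.trans hbT)
        rw [hst] at h3 h4
        exact ⟨h1, h2, h3, h4⟩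
    rw [hseq]
    have hfm : Measurable fun t => min (sc t) (σ k) :=
      hsccont.measurable.min measurable_const
    have hgm : Measurable fun t => max (sc t) (σ k) :=
      hsccont.measurable.max measurable_const
    have hmeas : MeasurableSet (regionBetween (fun t => min (sc t) (σ k))
        (fun t => max (sc t) (σ k)) (Set.Ioo a b)) :=
      measurableSet_regionBetween hfm hgm measurableSet_Ioo
    have hswap : volume (Prod.swap ⁻¹' (regionBetween (fun t => min (sc t) (σ k))
        (fun t => max (sc t) (σ k)) (Set.Ioo a b)))
        = (volume.prod volume) (regionBetween (fun t => min (sc t) (σ k))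
            (fun t => max (sc t) (σ k)) (Set.Ioo a b)) := by
      rw [MeasureTheory.Measure.volume_eq_prod]
      exact MeasureTheory.Measure.measurePreserving_swap.measure_preimage
        hmeas.nullMeasurableSet
    rw [hswap]
    have hfint : IntegrableOn (fun t => min (sc t) (σ k)) (Set.Ioo a b) :=
      ((hsccont.min continuous_const).continuousOn.integrableOn_Icc).mono_set
        Set.Ioo_subset_Icc_self
    have hgint : IntegrableOn (fun t => max (sc t) (σ k)) (Set.Ioo a b) :=
      ((hsccont.max continuous_const).continuousOn.integrableOn_Icc).mono_set
        Set.Ioo_subset_Icc_self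
    rw [volume_regionBetween_eq_integral hfint hgint measurableSet_Ioo
      (fun x _ => min_le_max)]
    apply ENNReal.ofReal_le_ofReal
    have hIoo : ∫ y in Set.Ioo a b,
        ((fun t => max (sc t) (σ k)) - fun t => min (sc t) (σ k)) y
        = ∫ y in a..b, |sc y - σ k| := by
      rw [intervalIntegral.integral_of_le hab, integral_Ioc_eq_integral_Ioo]
      apply setIntegral_congr_fun measurableSet_Ioo
      intro y _
      simp [max_sub_min_eq_abs, abs_sub_comm]
    rw [hIoo]
    -- pointwise bound
    set C : ℝ := M + ∫ u in a..b, |s' u| with hCdef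
    have hpt : ∀ t ∈ Set.Icc a b, |sc t - σ k| ≤ C := by
      intro t ht
      have ht0 : 0 ≤ t := le_trans ha0 ht.1
      have htT : t ≤ T := le_trans ht.2 hbT
      rw [hsceq t ht0 htT]
      have h1 : |s t - σ k| ≤ |s b - σ k| + |s b - s t| := by
        have : s t - σ k = (s b - σ k) - (s b - s t) := by ring
        rw [this]
        exact (abs_sub _ _)
      have h2 : |s b - σ k| ≤ M := hM k hk
      have h3 : s b - s t = ∫ u in t..b, s' u := hftc t b ht0 ht.2 hbT
      have h4 : |∫ u in t..b, s' u| ≤ ∫ u in t..b, |s' u| :=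
        intervalIntegral.abs_integral_le_integral_abs ht.2
      have h5 : ∫ u in t..b, |s' u| ≤ ∫ u in a..b, |s' u| :=
        intervalIntegral.integral_mono_interval ht.1 ht.2 le_rfl
          (Filter.Eventually.of_forall fun u => abs_nonneg _) habs
      rw [h3] at h1
      calc |s t - σ k| ≤ |s b - σ k| + |∫ u in t..b, s' u| := h1
        _ ≤ M + ∫ u in a..b, |s' u| := add_le_add h2 (h4.trans h5)
    have hcont1 : IntervalIntegrable (fun y => |sc y - σ k|) volume a b :=
      (((hsccont.sub continuous_const).abs)).intervalIntegrable a b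
    have hstep : ∫ y in a..b, |sc y - σ k| ≤ (b - a) * C := by
      calc ∫ y in a..b, |sc y - σ k| ≤ ∫ _ in a..b, C :=
            intervalIntegral.integral_mono_on hab hcont1
              intervalIntegrable_const hpt
        _ = (b - a) * C := by rw [intervalIntegral.integral_const]; simp [smul_eq_mul]
    have hcs : ∫ u in a..b, |s' u| ≤
        Real.sqrt τ * Real.sqrt (∫ t in a..b, (s' t)^2) := by
      have := cs_aux hab hs'ab hs'sqab
      rwa [show b - a = τ by rw [hba]; ring] at this
    have hba' : b - a = τ := by rw [hba]; ring
    calc ∫ y in a..b, |sc y - σ k| ≤ (b - a) * C := hstep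
      _ = τ * (M + ∫ u in a..b, |s' u|) := by rw [hba', hCdef]
      _ ≤ τ * (Real.sqrt τ * Real.sqrt (∫ t in a..b, (s' t)^2) + M) := by
          apply mul_le_mul_of_nonneg_left _ hτ0.le
          linarith [hcs]
  -- sum up
  calc volume (⋃ k ∈ Finset.Icc 1 n,
        {p : ℝ × ℝ | ((k:ℝ)-1)*τ < p.2 ∧ p.2 < (k:ℝ)*τ ∧
          min (s p.2) (σ k) < p.1 ∧ p.1 < max (s p.2) (σ k)})
      ≤ ∑ k ∈ Finset.Icc 1 n, volume
        {p : ℝ × ℝ | ((k:ℝ)-1)*τ < p.2 ∧ p.2 < (k:ℝ)*τ ∧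
          min (s p.2) (σ k) < p.1 ∧ p.1 < max (s p.2) (σ k)} :=
        measure_biUnion_finset_le _ _
    _ ≤ ∑ k ∈ Finset.Icc 1 n, ENNReal.ofReal (τ * (Real.sqrt τ *
          Real.sqrt (∫ t in (((k:ℝ)-1)*τ)..((k:ℝ)*τ), (s' t)^2) + M)) :=
        Finset.sum_le_sum key
    _ = ENNReal.ofReal (∑ k ∈ Finset.Icc 1 n, τ * (Real.sqrt τ *
          Real.sqrt (∫ t in (((k:ℝ)-1)*τ)..((k:ℝ)*τ), (s' t)^2) + M)) := by
        rw [ENNReal.ofReal_sum_of_nonneg]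
        intro k hk
        positivity
    _ ≤ ENNReal.ofReal (Real.sqrt T * Real.sqrt (∫ t in (0:ℝ)..T, (s' t)^2) * τ
          + T * M) := by
        apply ENNReal.ofReal_le_ofReal
        -- real arithmetic
        set I : ℕ → ℝ := fun k => ∫ t in (((k:ℝ)-1)*τ)..((k:ℝ)*τ), (s' t)^2 with hIdef
        have hab' : ∀ k : ℕ, 1 ≤ k → (((k:ℝ)-1)*τ) ≤ ((k:ℝ)*τ) := by
          intro k hk1
          have : (1:ℝ) ≤ (k:ℝ) := by exact_mod_cast hk1
          nlinarith
        have hInn : ∀ k ∈ Finset.Icc 1 n, 0 ≤ I k := by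
          intro k hk
          obtain ⟨hk1, _⟩ := Finset.mem_Icc.mp hk
          exact intervalIntegral.integral_nonneg (hab' k hk1) (fun u _ => sq_nonneg _)
        -- total integral identity
        have hsumI : ∑ k ∈ Finset.Icc 1 n, I k = ∫ t in (0:ℝ)..T, (s' t)^2 := by
          have hre : ∑ k ∈ Finset.Icc 1 n, I k
              = ∑ i ∈ Finset.range n, ∫ t in ((i:ℝ)*τ)..(((i:ℕ)+1:ℝ)*τ), (s' t)^2 := by
            rw [← Finset.Ico_add_one_right_eq_Icc, Finset.sum_Ico_eq_sum_range]
            apply Finset.sum_congr (by norm_num)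
            intro i _
            have h1 : (((1+i:ℕ):ℝ)-1)*τ = (i:ℝ)*τ := by push_cast; ring
            have h2 : ((1+i:ℕ):ℝ)*τ = ((i:ℕ)+1:ℝ)*τ := by push_cast; ring
            simp only [hIdef, h1, h2]
          rw [hre]
          have := intervalIntegral.sum_integral_adjacent_intervals
            (f := fun t => (s' t)^2) (μ := volume) (a := fun i => (i:ℝ)*τ) (n := n) ?_
          · simp only [Nat.cast_zero, zero_mul] at this
            push_cast at this ⊢
            rw [← hnτ]
            exact this
          · intro i hi
            apply hs'sq.mono_set
            rw [Set.uIcc_of_le, Set.uIcc_of_le hT.le]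
            · apply Set.Icc_subset_Icc
              · positivity
              · rw [← hnτ]
                apply mul_le_mul_of_nonneg_right _ hτ0.le
                exact_mod_cast Nat.succ_le_of_lt hi
            · apply mul_le_mul_of_nonneg_right _ hτ0.le
              push_cast; linarith
        -- Cauchy-Schwarz on the sum
        set S : ℝ := ∑ k ∈ Finset.Icc 1 n, Real.sqrt (I k) with hSdef
        have hS0 : 0 ≤ S := Finset.sum_nonneg fun k _ => Real.sqrt_nonneg _
        have hSsq : S^2 ≤ (n:ℝ) * ∑ k ∈ Finset.Icc 1 n, I k := by
          have h := sq_sum_le_card_mul_sum_sq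
            (s := Finset.Icc 1 n) (f := fun k => Real.sqrt (I k))
          have hcard : ((Finset.Icc 1 n).card : ℝ) = n := by
            rw [Nat.card_Icc]; simp
          calc S^2 ≤ ((Finset.Icc 1 n).card : ℝ) *
                ∑ k ∈ Finset.Icc 1 n, Real.sqrt (I k) ^ 2 := by exact_mod_cast h
            _ = (n:ℝ) * ∑ k ∈ Finset.Icc 1 n, I k := by
                rw [hcard]
                congr 1
                apply Finset.sum_congr rfl
                intro k hk
                exact Real.sq_sqrt (hInn k hk)
        have hSle : S ≤ Real.sqrt (n:ℝ) * Real.sqrt (∫ t in (0:ℝ)..T, (s' t)^2) := by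
          rw [← Real.sqrt_mul (Nat.cast_nonneg n), ← hsumI]
          calc S = Real.sqrt (S^2) := (Real.sqrt_sq hS0).symm
            _ ≤ _ := Real.sqrt_le_sqrt hSsq
        -- conclude
        have hsum_split : ∑ k ∈ Finset.Icc 1 n, τ * (Real.sqrt τ * Real.sqrt (I k) + M)
            = τ * Real.sqrt τ * S + (n:ℝ) * (τ * M) := by
          calc ∑ k ∈ Finset.Icc 1 n, τ * (Real.sqrt τ * Real.sqrt (I k) + M)
              = (∑ k ∈ Finset.Icc 1 n, τ * Real.sqrt τ * Real.sqrt (I k))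
                + ∑ _k ∈ Finset.Icc 1 n, τ * M := by
                rw [← Finset.sum_add_distrib]
                apply Finset.sum_congr rfl
                intro k _
                ring
            _ = τ * Real.sqrt τ * S + (n:ℝ) * (τ * M) := by
                rw [← Finset.mul_sum, Finset.sum_const, Nat.card_Icc,
                  Nat.add_sub_cancel, nsmul_eq_mul, hSdef]
        rw [hsum_split]
        have h1 : τ * Real.sqrt τ * S
            ≤ τ * Real.sqrt τ * (Real.sqrt (n:ℝ) * Real.sqrt (∫ t in (0:ℝ)..T, (s' t)^2)) :=
          mul_le_mul_of_nonneg_left hSle (by positivity)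
        have h2 : τ * Real.sqrt τ * (Real.sqrt (n:ℝ) * Real.sqrt (∫ t in (0:ℝ)..T, (s' t)^2))
            = Real.sqrt T * Real.sqrt (∫ t in (0:ℝ)..T, (s' t)^2) * τ := by
          have : Real.sqrt τ * Real.sqrt (n:ℝ) = Real.sqrt T := by
            rw [← Real.sqrt_mul hτ0.le, mul_comm τ ((n:ℝ)), hnτ]
          calc τ * Real.sqrt τ * (Real.sqrt (n:ℝ) * Real.sqrt (∫ t in (0:ℝ)..T, (s' t)^2))
              = (Real.sqrt τ * Real.sqrt (n:ℝ)) * Real.sqrt (∫ t in (0:ℝ)..T, (s' t)^2) * τ := by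
                ring
            _ = _ := by rw [this]
        have h3 : (n:ℝ) * (τ * M) = T * M := by rw [← hnτ]; ring
        rw [h3]
        have := h1.trans_eq h2
        linarith
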